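/- arXiv:1905.13571 — 2 statements merged into one kernel-verified Lean document; each statement's English description precedes it below -/
import Mathlib

section
/- Let A be a Poisson algebra over a field F and let I be an ideal of the Lie algebra {A,A}. Then {{I,I}, A} ⊆ I. Consequently, if U is an ideal of {A,A} with derived series U^[0] = U, U^[i+1] = {U^[i],U^[i]}, then {U^[i+1], A} ⊆ U^[i] for all i ≥ 0. -/
/-- A Poisson bracket on a commutative `F`-algebra `A`: an `F`-bilinear map
`{,} : A × A → A` making `(A, {,})` a Lie algebra and satisfying the Leibniz
rule `{ab, c} = a{b,c} + {a,c}b`. -/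
structure PoissonBracket (F : Type*) (A : Type*) [Field F] [CommRing A] [Algebra F A] where
  br : A →ₗ[F] A →ₗ[F] A
  br_self : ∀ a : A, br a a = 0
  jacobi : ∀ a b c : A, br a (br b c) + br b (br c a) + br c (br a b) = 0
  leibniz : ∀ a b c : A, br (a * b) c = a * br b c + br a c * b

namespace PoissonBracket

variable {F A : Type*} [Field F] [CommRing A] [Algebra F A]

/-- `{A, A}` : the `F`-linear span of all brackets `{a, b}`, `a, b ∈ A`. -/
def lieSpan (P : PoissonBracket F A) : Submodule F A :=
  Submodule.span F {x : A | ∃ a b : A, P.br a b = x}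

/-- `{M, N}` : the `F`-linear span of all brackets `{u, v}`, `u ∈ M`, `v ∈ N`. -/
def brSpan (P : PoissonBracket F A) (M N : Submodule F A) : Submodule F A :=
  Submodule.span F {x : A | ∃ u ∈ M, ∃ v ∈ N, P.br u v = x}

/-- `U` is an ideal of the Lie algebra `{A, A}`. -/
def IsLieIdealOfBrackets (P : PoissonBracket F A) (U : Submodule F A) : Prop :=
  U ≤ P.lieSpan ∧ ∀ x ∈ P.lieSpan, ∀ u ∈ U, P.br x u ∈ U

/-- The derived series `U^[0] = U`, `U^[i+1] = {U^[i], U^[i]}`. -/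
def derived (P : PoissonBracket F A) (U : Submodule F A) : ℕ → Submodule F A
  | 0 => U
  | (i + 1) => P.brSpan (P.derived U i) (P.derived U i)

/-- `A` is a simple Poisson algebra: it has no Poisson ideals other than `(0)` and `A`. -/
def IsSimple (P : PoissonBracket F A) : Prop :=
  ∀ I : Ideal A, (∀ a ∈ I, ∀ b : A, P.br a b ∈ I) → I = ⊥ ∨ I = ⊤

/-- The Poisson center `Z = {a ∈ A | {a, A} = (0)}`. -/
def pCenter (P : PoissonBracket F A) : Submodule F A where
  carrier := {a : A | ∀ b : A, P.br a b = 0}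
  add_mem' := by
    intro x y hx hy b
    simp [map_add, hx b, hy b]
  zero_mem' := by
    intro b
    simp
  smul_mem' := by
    intro c x hx b
    simp [map_smul, hx b]

end PoissonBracket

variable {F A : Type*} [Field F] [CommRing A] [Algebra F A]

open PoissonBracket

lemma my_br_antisymm (P : PoissonBracket F A) (a b : A) : P.br a b = - P.br b a := by
  have h := P.br_self (a + b)
  simp only [map_add, LinearMap.add_apply, P.br_self, zero_add, add_zero] at h
  linear_combination h

lemma my_mem_lieSpan (P : PoissonBracket F A) (a b : A) : P.br a b ∈ P.lieSpan :=
  Submodule.subset_span ⟨a, b, rfl⟩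

lemma my_key (P : PoissonBracket F A) (I : Submodule F A) (hI : P.IsLieIdealOfBrackets I) :
    ∀ x ∈ P.brSpan I I, ∀ a : A, P.br x a ∈ I := by
  intro x hx a
  induction hx using Submodule.span_induction with
  | mem x hgen =>
    obtain ⟨u, hu, v, hv, rfl⟩ := hgen
    have jac := P.jacobi a u v
    have h1 : P.br (P.br u v) a = P.br u (P.br v a) + P.br v (P.br a u) := by
      rw [my_br_antisymm P (P.br u v) a]
      linear_combination -jac
    rw [h1]
    have m1 : P.br u (P.br v a) ∈ I := by
      rw [my_br_antisymm]
      exact I.neg_mem (hI.2 _ (my_mem_lieSpan P v a) u hu)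
    have m2 : P.br v (P.br a u) ∈ I := by
      rw [my_br_antisymm]
      exact I.neg_mem (hI.2 _ (my_mem_lieSpan P a u) v hv)
    exact I.add_mem m1 m2
  | zero => simp
  | add y z _ _ hy hz => simpa [map_add] using I.add_mem hy hz
  | smul c y _ hy => simpa [map_smul] using I.smul_mem c hy

lemma my_brSpan_ideal (P : PoissonBracket F A) (U : Submodule F A)
    (hU : P.IsLieIdealOfBrackets U) : P.IsLieIdealOfBrackets (P.brSpan U U) := by
  constructor
  · apply Submodule.span_le.2
    rintro x ⟨u, _, v, _, rfl⟩
    exact my_mem_lieSpan P u v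
  · intro x hx u hu
    induction hu using Submodule.span_induction with
    | mem y hgen =>
      obtain ⟨p, hp, q, hq, rfl⟩ := hgen
      have jac := P.jacobi x p q
      have h1 : P.br x (P.br p q) = P.br p (P.br x q) - P.br q (P.br x p) := by
        have h2 : P.br q x = - P.br x q := my_br_antisymm P q x
        rw [h2] at jac
        simp only [map_neg] at jac
        linear_combination jac
      rw [h1]
      have m1 : P.br p (P.br x q) ∈ P.brSpan U U :=
        Submodule.subset_span ⟨p, hp, P.br x q, hU.2 x hx q hq, rfl⟩
      have m2 : P.br q (P.br x p) ∈ P.brSpan U U :=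
        Submodule.subset_span ⟨q, hq, P.br x p, hU.2 x hx p hp, rfl⟩
      exact Submodule.sub_mem _ m1 m2
    | zero => simp
    | add y z _ _ hy hz => simpa [map_add] using Submodule.add_mem _ hy hz
    | smul c y _ hy => simpa [map_smul] using Submodule.smul_mem _ c hy

lemma my_derived_ideal (P : PoissonBracket F A) (U : Submodule F A)
    (hU : P.IsLieIdealOfBrackets U) : ∀ i, P.IsLieIdealOfBrackets (P.derived U i) := by
  intro i
  induction i with
  | zero => exact hU
  | succ n ih => exact my_brSpan_ideal P _ ih

/-- For every ideal `I` of the Lie algebra `{A, A}` one has `{{I, I}, A} ⊆ I`;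
consequently `{U^[i+1], A} ⊆ U^[i]` for every ideal `U` of `{A, A}` and all `i ≥ 0`. -/
theorem brackets_of_derived_subset
    (P : PoissonBracket F A) (I : Submodule F A) (hI : P.IsLieIdealOfBrackets I) :
    (∀ x ∈ P.brSpan I I, ∀ a : A, P.br x a ∈ I) ∧
      ∀ U : Submodule F A, P.IsLieIdealOfBrackets U →
        ∀ i : ℕ, ∀ x ∈ P.derived U (i + 1), ∀ a : A, P.br x a ∈ P.derived U i := by
  refine ⟨my_key P I hI, fun U hU i => my_key P _ (my_derived_ideal P U hU i)⟩
end

section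
/- Let A be a Poisson algebra over a field F and let a, b ∈ A satisfy {a, {a, b}} = 0. Then for every n ≥ 1, ad(a)^n(b^n) = n!·{a,b}^n, where ad(a) : A → A is the map x ↦ {a,x}. -/
variable {F A : Type*} [Field F] [CommRing A] [Algebra F A]

open PoissonBracket

lemma PoissonBracket.br_antisymm (P : PoissonBracket F A) (x y : A) :
    P.br x y = - P.br y x := by
  have h := P.br_self (x + y)
  simp only [map_add, LinearMap.add_apply, P.br_self] at h
  linear_combination h

lemma PoissonBracket.br_mul (P : PoissonBracket F A) (x y z : A) :
    P.br x (y * z) = y * P.br x z + P.br x y * z := by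
  have h1 := P.br_antisymm x (y * z)
  rw [P.leibniz y z x, P.br_antisymm y x, P.br_antisymm z x] at h1
  linear_combination h1

lemma PoissonBracket.br_pow (P : PoissonBracket F A) (x y : A) (m : ℕ) :
    P.br x (y ^ (m + 1)) = (m + 1) • (P.br x y * y ^ m) := by
  induction m with
  | zero => simp
  | succ m ih =>
    rw [pow_succ', P.br_mul, ih, mul_smul_comm, succ_nsmul]
    have : y * (P.br x y * y ^ m) = P.br x y * y ^ (m + 1) := by ring
    rw [this, pow_succ']
    have : P.br x y * (y * y ^ m) = P.br x y * y ^ m * y := by ring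
    rw [this]
    simp [succ_nsmul, add_assoc]
    ring

lemma PoissonBracket.br_one (P : PoissonBracket F A) (x : A) : P.br x 1 = 0 := by
  have := P.br_mul x 1 1
  simp only [mul_one, one_mul] at this
  linear_combination -this

lemma PoissonBracket.ad_pow_key (P : PoissonBracket F A) (a b : A)
    (h : P.br a (P.br a b) = 0) :
    ∀ k n : ℕ, ((P.br a) ^ k) (b ^ (n + k))
      = ((n + k).descFactorial k) • ((P.br a b) ^ k * b ^ n) := by
  intro k
  induction k with
  | zero => simp
  | succ k ih =>
    intro n
    have hc : ∀ j : ℕ, P.br a ((P.br a b) ^ j * b ^ (n + 1)) =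
        (P.br a b) ^ j * P.br a (b ^ (n + 1)) := by
      intro j
      rw [P.br_mul]
      have : P.br a ((P.br a b) ^ j) = 0 := by
        induction j with
        | zero => simpa using P.br_one a
        | succ j ihj => rw [pow_succ, P.br_mul, ihj, h]; ring
      rw [this]; ring
    have step : ((P.br a) ^ (k + 1)) (b ^ (n + (k + 1)))
        = P.br a (((P.br a) ^ k) (b ^ ((n + 1) + k))) := by
      rw [pow_succ', Module.End.mul_apply]
      congr 1
      ring
    rw [step, ih (n + 1), map_nsmul, hc, P.br_pow, Nat.descFactorial_succ]
    have harith : n + (k + 1) - k = n + 1 := by omega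
    rw [harith]
    have harith2 : (n + 1) + k = n + (k + 1) := by ring
    rw [harith2]
    rw [mul_smul_comm, smul_smul, mul_comm ((n:ℕ) + 1)]
    congr 1
    ring

/-- If `{a, {a, b}} = 0` then `ad(a)^n (b^n) = n! ⬝ {a,b}^n` for all `n ≥ 1`. -/
theorem ad_pow_apply_pow
    (P : PoissonBracket F A) (a b : A) (h : P.br a (P.br a b) = 0) :
    ∀ n : ℕ, 1 ≤ n → ((P.br a) ^ n) (b ^ n) = n.factorial • (P.br a b) ^ n := by
  intro n _
  have := P.ad_pow_key a b h n 0
  simpa [Nat.descFactorial_self] using this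
end
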